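/- arXiv:2107.04202 — 2 statements merged into one kernel-verified Lean document; each statement's English description precedes it below -/
import Mathlib

section
/- Let X₁, …, X_u be i.i.d. ℤ-valued random variables, let K ⊆ ℤ be a set with |K| ≤ 5 and Σ_{k ∈ K} P(X₁ = k) ≥ α, and suppose P(X₁ = k) ≤ β for all k ∉ K. Let α₀ satisfy α₀ ≥ (5/4)·β and α ≥ 6·α₀. Then the probability of the event { there exists k ∉ K with #{ j : X_j = k } ≥ α₀·u } ∪ { for every k ∈ K, #{ j : X_j = k } < α₀·u } is at most (u+1)·exp( −2u(α₀/5)² ). -/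
open MeasureTheory ProbabilityTheory

open Real

lemma binom_term_le_one (u j : ℕ) (hj : j ≤ u) (q : ℝ) (h0 : 0 ≤ q) (h1 : q ≤ 1) :
    (u.choose j : ℝ) * q ^ j * (1 - q) ^ (u - j) ≤ 1 := by
  have key : ((q + (1 - q)) : ℝ) ^ u = ∑ k ∈ Finset.range (u + 1),
      q ^ k * (1 - q) ^ (u - k) * (u.choose k : ℝ) := add_pow q (1 - q) u
  have h1' : (0:ℝ) ≤ 1 - q := by linarith
  have : q ^ j * (1 - q) ^ (u - j) * (u.choose j : ℝ) ≤ 1 := by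
    calc q ^ j * (1 - q) ^ (u - j) * (u.choose j : ℝ)
        ≤ ∑ k ∈ Finset.range (u + 1), q ^ k * (1 - q) ^ (u - k) * (u.choose k : ℝ) := by
          apply Finset.single_le_sum (f := fun k => q ^ k * (1 - q) ^ (u - k) * (u.choose k : ℝ))
          · intro i _; positivity
          · simpa using Nat.lt_succ_of_le hj
      _ = 1 := by rw [← key]; simp
  linarith [this]

lemma exp_nat_log_pow {x : ℝ} (hx : 0 < x) (n : ℕ) : Real.exp ((n:ℝ) * Real.log x) = x ^ n := by
  rw [mul_comm, Real.exp_mul, Real.exp_log hx, Real.rpow_natCast]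

lemma binTerm (u j : ℕ) (hj : j ≤ u) (p : ℝ) {q : ℝ} (hq : q = (j:ℝ)/(u:ℝ)) (hq0 : 0 < q)
    (hp0 : 0 < p) (hp1 : p < 1) :
    (u.choose j : ℝ) * p ^ j * (1 - p) ^ (u - j) ≤
      Real.exp ((j:ℝ) * Real.log (p/q) + ((u - j : ℕ):ℝ) * Real.log ((1-p)/(1-q))) := by
  have hu : 0 < u := by
    rcases Nat.eq_zero_or_pos u with h | h
    · subst h; interval_cases j; simp at hq; simp [hq] at hq0
    · exact h
  have hq1 : q ≤ 1 := by
    rw [hq, div_le_one (by positivity)]; exact_mod_cast hj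
  have e1 : p ^ j = q ^ j * Real.exp ((j:ℝ) * Real.log (p/q)) := by
    rw [exp_nat_log_pow (by positivity), div_pow, mul_div_cancel₀]
    positivity
  have e2 : (1 - p) ^ (u - j) = (1-q) ^ (u - j) * Real.exp (((u - j : ℕ):ℝ) * Real.log ((1-p)/(1-q))) := by
    rcases eq_or_lt_of_le hq1 with h | h
    · have : j = u := by
        rw [hq] at h; field_simp at h; exact_mod_cast h
      subst this; simp
    · rw [exp_nat_log_pow (div_pos (by linarith) (by linarith)), div_pow, mul_div_cancel₀]
      exact pow_ne_zero _ (by linarith)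
  calc (u.choose j : ℝ) * p ^ j * (1 - p) ^ (u - j)
      = ((u.choose j : ℝ) * q ^ j * (1-q) ^ (u - j)) *
        (Real.exp ((j:ℝ) * Real.log (p/q)) * Real.exp (((u - j : ℕ):ℝ) * Real.log ((1-p)/(1-q)))) := by
        rw [e1, e2]; ring
    _ ≤ 1 * (Real.exp ((j:ℝ) * Real.log (p/q)) * Real.exp (((u - j : ℕ):ℝ) * Real.log ((1-p)/(1-q)))) := by
        apply mul_le_mul_of_nonneg_right (binom_term_le_one u j hj q hq0.le hq1); positivity
    _ = _ := by rw [one_mul, ← Real.exp_add]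

lemma L2 {p q : ℝ} (hq0 : 0 < q) (hqp : q ≤ p) (hp1 : p < 1) :
    (p - q)^2 / (2*p) ≤ q * (Real.log q - Real.log p) + (1-q) * (Real.log (1-q) - Real.log (1-p)) := by
  have hp0 : 0 < p := lt_of_lt_of_le hq0 hqp
  set f : ℝ → ℝ := fun x => x * Real.log x - x * Real.log p + (1-x) * Real.log (1-x)
      - (1-x) * Real.log (1-p) - (p-x)^2/(2*p) with hf
  have hxy : ∀ y : ℝ, 0 < y → y < 1 → HasDerivAt (fun x : ℝ => x * Real.log x) (Real.log y + 1) y := by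
    intro y hy0 _
    have := (hasDerivAt_id y).mul (Real.hasDerivAt_log (ne_of_gt hy0))
    exact this.congr_deriv (by simp [hy0.ne'])
  have hderiv : ∀ x ∈ Set.Ioo (0:ℝ) 1, HasDerivAt f
      ((Real.log x - Real.log (1-x) + (p-x)/p) - (Real.log p - Real.log (1-p))) x := by
    intro x hx
    obtain ⟨hx0, hx1⟩ := hx
    have h1 : HasDerivAt (fun x : ℝ => x * Real.log x) (Real.log x + 1) x := hxy x hx0 hx1
    have h2 : HasDerivAt (fun x : ℝ => x * Real.log p) (Real.log p) x := by
      simpa using (hasDerivAt_id x).mul_const (Real.log p)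
    have hin : HasDerivAt (fun x : ℝ => 1 - x) (-1) x := by
      simpa using (hasDerivAt_id x).const_sub 1
    have h3 : HasDerivAt (fun x : ℝ => (1-x) * Real.log (1-x)) (-(Real.log (1-x) + 1)) x := by
      have houter := hxy (1-x) (by linarith) (by linarith)
      have := HasDerivAt.comp x houter hin
      exact this.congr_deriv (by ring)
    have h4 : HasDerivAt (fun x : ℝ => (1-x) * Real.log (1-p)) (-Real.log (1-p)) x := by
      simpa using hin.mul_const (Real.log (1-p))
    have h5 : HasDerivAt (fun x : ℝ => (p-x)^2/(2*p)) (-(p-x)/p) x := by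
      have hin2 : HasDerivAt (fun x : ℝ => p - x) (-1) x := by
        simpa using (hasDerivAt_id x).const_sub p
      have := ((hin2.pow 2).div_const (2*p))
      refine this.congr_deriv ?_
      field_simp; ring
    have := (((h1.sub h2).add h3).sub h4).sub h5
    exact this.congr_deriv (by ring)
  have hdiff : DifferentiableOn ℝ f (Set.Ioo (0:ℝ) 1) := fun x hx =>
    ((hderiv x hx).differentiableAt).differentiableWithinAt
  -- deriv value nonpositive on Ioo q p
  have hsub : Set.Icc q p ⊆ Set.Ioo (0:ℝ) 1 := fun y hy => ⟨lt_of_lt_of_le hq0 hy.1, lt_of_le_of_lt hy.2 hp1⟩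
  have hanti : AntitoneOn f (Set.Icc q p) := by
    apply antitoneOn_of_deriv_nonpos (convex_Icc q p)
      (hdiff.continuousOn.mono hsub)
    · intro x hx
      rw [interior_Icc] at hx
      exact ((hderiv x (hsub ⟨hx.1.le, hx.2.le⟩)).differentiableAt).differentiableWithinAt
    · intro x hx
      rw [interior_Icc] at hx
      obtain ⟨hxq, hxp⟩ := hx
      have hx0 : 0 < x := lt_trans hq0 hxq
      have hx1 : x < 1 := lt_trans hxp hp1
      rw [(hderiv x ⟨hx0, hx1⟩).deriv]
      -- show log x - log(1-x) + (p-x)/p ≤ log p - log(1-p)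
      set g : ℝ → ℝ := fun y => Real.log y - Real.log (1-y) + (p-y)/p with hgdef
      have hgderiv : ∀ y ∈ Set.Ioo (0:ℝ) 1, HasDerivAt g (y⁻¹ + (1-y)⁻¹ - 1/p) y := by
        intro y hy
        obtain ⟨hy0, hy1⟩ := hy
        have g1 : HasDerivAt (fun y : ℝ => Real.log y) y⁻¹ y := Real.hasDerivAt_log (ne_of_gt hy0)
        have hin : HasDerivAt (fun y : ℝ => 1 - y) (-1) y := by
          simpa using (hasDerivAt_id y).const_sub 1
        have g2 : HasDerivAt (fun y : ℝ => Real.log (1-y)) (-(1-y)⁻¹) y := by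
          have := HasDerivAt.comp y (Real.hasDerivAt_log (by linarith : (1:ℝ)-y ≠ 0)) hin
          exact this.congr_deriv (by ring)
        have g3 : HasDerivAt (fun y : ℝ => (p-y)/p) (-(1:ℝ)/p) y := by
          have hin2 : HasDerivAt (fun y : ℝ => p - y) (-1) y := by
            simpa using (hasDerivAt_id y).const_sub p
          simpa using hin2.div_const p
        have := (g1.sub g2).add g3
        exact this.congr_deriv (by ring)
      have hgdiff : DifferentiableOn ℝ g (Set.Ioo (0:ℝ) 1) := fun y hy =>
        ((hgderiv y hy).differentiableAt).differentiableWithinAt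
      have hsub2 : Set.Icc x p ⊆ Set.Ioo (0:ℝ) 1 := fun y hy =>
        ⟨lt_of_lt_of_le hx0 hy.1, lt_of_le_of_lt hy.2 hp1⟩
      have hmono : MonotoneOn g (Set.Icc x p) := by
        apply monotoneOn_of_deriv_nonneg (convex_Icc x p) (hgdiff.continuousOn.mono hsub2)
        · intro y hy
          rw [interior_Icc] at hy
          exact ((hgderiv y (hsub2 ⟨hy.1.le, hy.2.le⟩)).differentiableAt).differentiableWithinAt
        · intro y hy
          rw [interior_Icc] at hy
          obtain ⟨hyx, hyp⟩ := hy
          have hy0 : 0 < y := lt_trans hx0 hyx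
          have hy1 : y < 1 := lt_trans hyp hp1
          rw [(hgderiv y ⟨hy0, hy1⟩).deriv]
          have : (1:ℝ)/p ≤ y⁻¹ := by
            rw [one_div]
            exact inv_anti₀ hy0 hyp.le
          have : (0:ℝ) < (1-y)⁻¹ := inv_pos.mpr (by linarith)
          linarith
      have hgle : g x ≤ g p := hmono ⟨le_refl x, hxp.le⟩ ⟨hxp.le, le_refl p⟩ hxp.le
      simp only [hgdef] at hgle
      have hpp : (p-p)/p = 0 := by simp
      linarith [hgle]
  have hfq : f p ≤ f q := hanti ⟨le_refl q, hqp⟩ ⟨hqp, le_refl p⟩ hqp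
  simp only [hf] at hfq
  have h0 : p * Real.log p - p * Real.log p + (1 - p) * Real.log (1 - p)
      - (1 - p) * Real.log (1 - p) - (p - p) ^ 2 / (2 * p) = 0 := by ring
  ring_nf at hfq ⊢
  linarith [hfq, h0]

lemma core2 (u j : ℕ) (hj : j ≤ u) (hu : 0 < u) (p a : ℝ) (ha0 : 0 < a) (ha6 : a ≤ 1/6)
    (hpa : 6/5 * a ≤ p) (hp1 : p ≤ 1) (hja : (j:ℝ) ≤ a * u) :
    (u.choose j : ℝ) * p ^ j * (1 - p) ^ (u - j) ≤ Real.exp (-2 * u * (a/5)^2) := by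
  have hp0 : 0 < p := lt_of_lt_of_le (by linarith) hpa
  have hju : j < u := by
    by_contra h
    push_neg at h
    have : (u:ℝ) ≤ (j:ℝ) := by exact_mod_cast h
    have hu' : (1:ℝ) ≤ u := by exact_mod_cast hu
    nlinarith
  rcases eq_or_lt_of_le hp1 with hp1' | hp1'
  · -- p = 1
    subst hp1'
    have : (1 - (1:ℝ)) ^ (u - j) = 0 := by
      rw [sub_self]
      exact zero_pow (by omega)
    rw [this]
    simp [Real.exp_nonneg]
  rcases Nat.eq_zero_or_pos j with hj0 | hj1
  · -- j = 0
    subst hj0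
    simp only [Nat.choose_zero_right, Nat.cast_one, pow_zero, one_mul, Nat.sub_zero]
    have h1 : (1 - p) ≤ Real.exp (-p) := by
      have := Real.add_one_le_exp (-p)
      linarith
    have h2 : (1 - p) ^ u ≤ Real.exp (-p) ^ u :=
      pow_le_pow_left₀ (by linarith) h1 u
    refine h2.trans ?_
    rw [← Real.exp_nat_mul]
    apply Real.exp_le_exp.mpr
    have hu' : (1:ℝ) ≤ u := by exact_mod_cast hu
    nlinarith [mul_le_mul_of_nonneg_left hpa (le_of_lt (by positivity : (0:ℝ) < (u:ℝ)))]
  -- main case 1 ≤ j < u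
  set q : ℝ := (j:ℝ)/(u:ℝ) with hqdef
  have hq0 : 0 < q := by positivity
  have hq1 : q < 1 := by
    rw [hqdef, div_lt_one (by positivity)]
    exact_mod_cast hju
  have hqa : q ≤ a := by
    rw [hqdef, div_le_iff₀ (by positivity)]
    linarith [hja]
  have hqp : q ≤ p := by nlinarith
  have hbt := binTerm u j hj p hqdef hq0 hp0 hp1'
  refine hbt.trans ?_
  apply Real.exp_le_exp.mpr
  have hKL := L2 hq0 hqp hp1'
  have hcast : ((u - j : ℕ):ℝ) = (u:ℝ) - (j:ℝ) := by
    rw [Nat.cast_sub hj]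
  have hlpq : Real.log (p/q) = Real.log p - Real.log q := Real.log_div (ne_of_gt hp0) (ne_of_gt hq0)
  have hl1 : Real.log ((1-p)/(1-q)) = Real.log (1-p) - Real.log (1-q) :=
    Real.log_div (by linarith) (by linarith)
  have hjq : (j:ℝ) = u * q := by
    rw [hqdef]; field_simp
  -- exponent = -u * KL ≤ -u*(p-q)^2/(2p) ≤ -2u(a/5)^2
  have hKL2 : (p - q)^2 / (2*p) ≥ 2 * (a/5)^2 := by
    rw [ge_iff_le, le_div_iff₀ (by positivity : (0:ℝ) < 2*p)]
    have h1 : (0:ℝ) ≤ p - 6/5*a := by linarith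
    have h2 : (0:ℝ) ≤ 10*a - 4*a^2 := by
      have : a*a ≤ a * (1/6) := mul_le_mul_of_nonneg_left ha6 ha0.le
      have haa : a^2 = a*a := sq a
      linarith
    have h3 : (0:ℝ) ≤ a^2 * (1 - 24*a/5) := by
      apply mul_nonneg (sq_nonneg a); linarith
    have h4 : (0:ℝ) ≤ (a - q) * (2*p - q - a) := by
      apply mul_nonneg <;> linarith
    have key : (p-q)^2 - 2*(a/5)^2*(2*p) = (a - q)*(2*p - q - a) + (p - 6/5*a)^2
        + (p - 6/5*a)*(10*a - 4*a^2)/25 + a^2*(1 - 24*a/5)/25 := by ring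
    have h5 := mul_nonneg h1 h2
    have h6 := sq_nonneg (p - 6/5*a)
    linarith
  have hu0 : (0:ℝ) < u := by positivity
  calc (j:ℝ) * Real.log (p/q) + ((u - j : ℕ):ℝ) * Real.log ((1-p)/(1-q))
      = -((u:ℝ) * (q * (Real.log q - Real.log p) + (1-q) * (Real.log (1-q) - Real.log (1-p)))) := by
        rw [hcast, hlpq, hl1, hjq]; ring
    _ ≤ -((u:ℝ) * ((p - q)^2 / (2*p))) := by
        apply neg_le_neg
        exact mul_le_mul_of_nonneg_left hKL hu0.le
    _ ≤ -2 * u * (a/5)^2 := by nlinarith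

lemma log54_lb : (0.2231 : ℝ) ≤ Real.log (5/4) := by
  rw [Real.le_log_iff_exp_le (by norm_num)]
  have h := Real.exp_bound' (x := 0.2231) (by norm_num) (by norm_num) (n := 4) (by norm_num)
  refine h.trans ?_
  simp [Finset.sum_range_succ]
  norm_num [Nat.factorial]

lemma log54_ub : Real.log (5/4) ≤ (0.2232 : ℝ) := by
  rw [Real.log_le_iff_le_exp (by norm_num)]
  have h := Real.sum_le_exp_of_nonneg (x := 0.2232) (by norm_num) 5
  refine le_trans ?_ h
  simp [Finset.sum_range_succ]
  norm_num [Nat.factorial]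

set_option maxHeartbeats 2000000 in
lemma core1 (u j : ℕ) (hj : j ≤ u) (p a : ℝ) (hp0 : 0 < p) (hpa : p ≤ 4/5 * a)
    (ha6 : a ≤ 1/6) (hja : a * (u:ℝ) ≤ (j:ℝ))
    (hreg : 25 * Real.log ((u:ℝ)+1) < 2 * (u:ℝ) * a^2) :
    (u.choose j : ℝ) * p ^ j * (1 - p) ^ (u - j) ≤ p * Real.exp (-2 * (u:ℝ) * (a/5)^2) := by
  have ha0 : 0 < a := by linarith
  have hu : 0 < u := by
    rcases Nat.eq_zero_or_pos u with h | h
    · exfalso; subst h; simp at hreg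
    · exact h
  have hu0 : (0:ℝ) < u := by exact_mod_cast hu
  have hl2 : (0.6931:ℝ) < Real.log 2 := by linarith [Real.log_two_gt_d9]
  have hu1 : (1:ℝ) ≤ (u:ℝ) := by exact_mod_cast hu
  have hloguA : Real.log 2 ≤ Real.log ((u:ℝ)+1) := by
    apply Real.log_le_log (by norm_num)
    linarith
  have ha36 : a^2 ≤ 1/36 := by nlinarith
  have hu311 : (311:ℝ) ≤ (u:ℝ) := by nlinarith
  have hlogu8 : 8 * Real.log 2 ≤ Real.log ((u:ℝ)+1) := by
    have h256 : ((256:ℝ)) ≤ (u:ℝ)+1 := by linarith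
    have := Real.log_le_log (by norm_num : (0:ℝ) < 256) h256
    have h2 : Real.log (256:ℝ) = 8 * Real.log 2 := by
      rw [show (256:ℝ) = 2^(8:ℕ) by norm_num, Real.log_pow]
      norm_num
    linarith
  have hua2 : (69:ℝ) ≤ (u:ℝ)*a^2 := by nlinarith
  have hua : (414:ℝ) ≤ (u:ℝ)*a := by
    have h3 : (u:ℝ)*a*(1 - 6*a) ≥ 0 := by
      apply mul_nonneg (mul_nonneg hu0.le ha0.le); linarith
    nlinarith
  have hp1 : p < 1 := by linarith
  have hj1 : 1 ≤ j := by
    by_contra h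
    push_neg at h
    interval_cases j
    simp at hja
    nlinarith
  set q : ℝ := (j:ℝ)/(u:ℝ) with hqdef
  have hq0 : 0 < q := by
    rw [hqdef]; positivity
  have hqa : a ≤ q := by
    rw [hqdef, le_div_iff₀ hu0]; linarith
  have hq1 : q ≤ 1 := by
    rw [hqdef, div_le_one hu0]; exact_mod_cast hj
  have hjq : (j:ℝ) = (u:ℝ) * q := by rw [hqdef]; field_simp
  have hbt := binTerm u j hj p hqdef hq0 hp0 hp1
  clear_value q
  set r : ℝ := Real.log q - Real.log p with hrdef
  clear_value r
  have hqp : p < q := by linarith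
  -- r ≥ log(5/4)
  have hcl : (0.2231:ℝ) ≤ Real.log (5/4) := log54_lb
  have hcu : Real.log (5/4) ≤ (0.2232:ℝ) := log54_ub
  have hrc : Real.log (5/4) ≤ r := by
    have h54 : (5/4 : ℝ) ≤ q / p := by
      rw [le_div_iff₀ hp0]; linarith
    have := Real.log_le_log (by norm_num) h54
    rw [Real.log_div (ne_of_gt hq0) (ne_of_gt hp0)] at this
    linarith
  -- p = q * exp(-r)
  have hpr : p = q * Real.exp (-r) := by
    rw [hrdef, neg_sub, Real.exp_sub, Real.exp_log hp0, Real.exp_log hq0]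
    field_simp
  -- step 1
  have step1 : ((u - j : ℕ):ℝ) * Real.log ((1-p)/(1-q)) ≤ (j:ℝ) - (u:ℝ)*p := by
    rcases eq_or_lt_of_le hq1 with h | h
    · have : j = u := by
        rw [hqdef] at h; field_simp at h; exact_mod_cast h
      subst this
      simp only [Nat.sub_self, Nat.cast_zero, zero_mul]
      have h' : (j:ℝ)*p ≤ (j:ℝ)*1 := mul_le_mul_of_nonneg_left hp1.le (Nat.cast_nonneg j)
      linarith
    · have h1q : (0:ℝ) < 1 - q := by linarith
      have hlog : Real.log ((1-p)/(1-q)) ≤ (1-p)/(1-q) - 1 :=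
        Real.log_le_sub_one_of_pos (div_pos (by linarith) h1q)
      have hcast : ((u - j : ℕ):ℝ) = (u:ℝ) - (j:ℝ) := by rw [Nat.cast_sub hj]
      have huj_nonneg : (0:ℝ) ≤ (u:ℝ) - (j:ℝ) := by
        rw [← hcast]; positivity
      calc ((u - j : ℕ):ℝ) * Real.log ((1-p)/(1-q))
          ≤ ((u:ℝ) - (j:ℝ)) * ((1-p)/(1-q) - 1) := by
            rw [hcast]
            exact mul_le_mul_of_nonneg_left hlog huj_nonneg
        _ = (j:ℝ) - (u:ℝ)*p := by
            rw [hjq]; field_simp; ring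
  have step2 : (j:ℝ) * Real.log (p/q) = -((j:ℝ) * r) := by
    rw [Real.log_div (ne_of_gt hp0) (ne_of_gt hq0), hrdef]; ring
  -- exponent bound: E ≤ -(j * (r - 1 + exp(-r)))
  have hE : (j:ℝ) * Real.log (p/q) + ((u - j : ℕ):ℝ) * Real.log ((1-p)/(1-q))
      ≤ -((j:ℝ) * (r - 1 + Real.exp (-r))) := by
    have hup : (u:ℝ)*p = (j:ℝ) * Real.exp (-r) := by
      rw [hpr, hjq]; ring
    rw [step2]
    have hx := step1
    rw [hup] at hx
    have hexpand : -((j:ℝ)*(r - 1 + Real.exp (-r))) = -((j:ℝ)*r) + ((j:ℝ) - (j:ℝ)*Real.exp (-r)) := by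
      ring
    linarith
  -- convexity bound
  have hconv : (Real.log (5/4) - 1/5) + (1/5)*(r - Real.log (5/4)) ≤ r - 1 + Real.exp (-r) := by
    have hec : Real.exp (-(Real.log (5/4))) = 4/5 := by
      rw [Real.exp_neg, Real.exp_log (by norm_num : (0:ℝ) < 5/4)]
      norm_num
    have h1 : Real.exp (-r) = (4/5) * Real.exp (-(r - Real.log (5/4))) := by
      rw [← hec, ← Real.exp_add]; ring_nf
    have h2 : 1 - (r - Real.log (5/4)) ≤ Real.exp (-(r - Real.log (5/4))) := by
      linarith [Real.add_one_le_exp (-(r - Real.log (5/4)))]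
    linarith
  have hh_nonneg : 0 ≤ (Real.log (5/4) - 1/5) + (1/5)*(r - Real.log (5/4)) := by
    linarith
  have hjr : (u:ℝ)*a * ((Real.log (5/4) - 1/5) + (1/5)*(r - Real.log (5/4)))
      ≤ (j:ℝ) * (r - 1 + Real.exp (-r)) := by
    have hj_ge : (u:ℝ)*a ≤ (j:ℝ) := by linarith [hja]
    calc (u:ℝ)*a * ((Real.log (5/4) - 1/5) + (1/5)*(r - Real.log (5/4)))
        ≤ (j:ℝ) * ((Real.log (5/4) - 1/5) + (1/5)*(r - Real.log (5/4))) :=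
          mul_le_mul_of_nonneg_right hj_ge hh_nonneg
      _ ≤ (j:ℝ) * (r - 1 + Real.exp (-r)) := by
          apply mul_le_mul_of_nonneg_left hconv
          positivity
  -- log q bound
  have hlogq : -Real.log q ≤ (1/2) * Real.log ((u:ℝ)+1) := by
    have hinv : ((u:ℝ)+1)⁻¹ ≤ a^2 := by
      rw [inv_eq_one_div, div_le_iff₀ (by positivity : (0:ℝ) < (u:ℝ)+1)]
      have hdistr2 : a^2*((u:ℝ)+1) = (u:ℝ)*a^2 + a^2 := by ring
      linarith [sq_nonneg a]
    have h1 : Real.log (((u:ℝ)+1)⁻¹) ≤ Real.log (a^2) :=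
      Real.log_le_log (by positivity) hinv
    rw [Real.log_inv, Real.log_pow] at h1
    have h2 : Real.log a ≤ Real.log q := Real.log_le_log ha0 hqa
    push_cast at h1
    linarith
  -- final numeric inequality
  have hfinal : Real.log (5/4) - Real.log q + (2/25)*(u:ℝ)*a^2 ≤ (u:ℝ)*a*(Real.log (5/4) - 1/5) := by
    have e0 : Real.log ((u:ℝ)+1) ≤ (2/25)*(u:ℝ)*a^2 := by linarith
    have e1 : (3/25)*((u:ℝ)*a^2) ≤ (1/50)*((u:ℝ)*a) := by
      have h' : (u:ℝ)*a*(3*a/25 - 1/50) ≤ 0 := by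
        apply mul_nonpos_of_nonneg_of_nonpos (by positivity)
        linarith
      have hid : (u:ℝ)*a*(3*a/25 - 1/50) = (3/25)*((u:ℝ)*a^2) - (1/50)*((u:ℝ)*a) := by ring
      linarith
    have e2 : (414:ℝ)*(0.0031) ≤ (u:ℝ)*a*(Real.log (5/4) - 1/5 - 1/50) := by
      have hfac : (0.0031:ℝ) ≤ Real.log (5/4) - 1/5 - 1/50 := by linarith
      have := mul_le_mul hua hfac (by norm_num) (by positivity)
      linarith
    have hid2 : (u:ℝ)*a*(Real.log (5/4) - 1/5 - 1/50)
        = (u:ℝ)*a*(Real.log (5/4) - 1/5) - (1/50)*((u:ℝ)*a) := by ring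
    linarith
  -- assemble
  have hEfinal : (j:ℝ) * Real.log (p/q) + ((u - j : ℕ):ℝ) * Real.log ((1-p)/(1-q))
      ≤ Real.log p + (-2 * (u:ℝ) * (a/5)^2) := by
    have hlogp : Real.log p = Real.log q - r := by rw [hrdef]; ring
    have h1 : (u:ℝ)*a*(Real.log (5/4) - 1/5) + (r - Real.log (5/4)) ≤ (j:ℝ) * (r - 1 + Real.exp (-r)) := by
      have h5 := mul_nonneg (by linarith : (0:ℝ) ≤ (u:ℝ)*a/5 - 1)
        (by linarith : (0:ℝ) ≤ r - Real.log (5/4))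
      have hid3 : (u:ℝ)*a * ((Real.log (5/4) - 1/5) + (1/5)*(r - Real.log (5/4)))
          = (u:ℝ)*a*(Real.log (5/4) - 1/5) + ((u:ℝ)*a/5 - 1)*(r - Real.log (5/4)) + (r - Real.log (5/4)) := by
        ring
      linarith [hjr]
    have h2 : -2 * (u:ℝ) * (a/5)^2 = -((2/25)*(u:ℝ)*a^2) := by ring
    rw [hlogp, h2]
    linarith [hE, h1, hfinal]
  calc (u.choose j : ℝ) * p ^ j * (1 - p) ^ (u - j)
      ≤ Real.exp ((j:ℝ) * Real.log (p/q) + ((u - j : ℕ):ℝ) * Real.log ((1-p)/(1-q))) := hbt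
    _ ≤ Real.exp (Real.log p + (-2 * (u:ℝ) * (a/5)^2)) := Real.exp_le_exp.mpr hEfinal
    _ = p * Real.exp (-2 * (u:ℝ) * (a/5)^2) := by
        rw [Real.exp_add, Real.exp_log hp0]

open MeasureTheory ProbabilityTheory in
lemma pmf_eq {Ω : Type*} [MeasurableSpace Ω] (P : Measure Ω) [IsProbabilityMeasure P]
    (u : ℕ) (X : Fin u → Ω → ℤ) (hmeas : ∀ j, Measurable (X j))
    (hindep : iIndepFun X P)
    (e : ℤ → ENNReal) (he : ∀ i k, P (X i ⁻¹' {k}) = e k) (k : ℤ) (j : ℕ) :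
    P {ω | (Finset.univ.filter fun i => X i ω = k).card = j}
      = (u.choose j : ENNReal) * (e k)^j * (1 - e k)^(u - j) := by
  classical
  set A : Finset (Fin u) → Set Ω := fun S => ⋂ i, X i ⁻¹' (if i ∈ S then {k} else {k}ᶜ) with hA
  have hmemA : ∀ S ω, ω ∈ A S ↔ ∀ i, (X i ω = k ↔ i ∈ S) := by
    intro S ω
    simp only [hA, Set.mem_iInter, Set.mem_preimage]
    constructor
    · intro h i
      have := h i
      by_cases hi : i ∈ S <;> simp [hi] at this ⊢ <;> tauto
    · intro h i
      by_cases hi : i ∈ S <;> simp [hi, h i]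
  have hAfilter : ∀ S ω, ω ∈ A S ↔ (Finset.univ.filter fun i => X i ω = k) = S := by
    intro S ω
    rw [hmemA]
    constructor
    · intro h; ext i; simp [h i]
    · intro h i
      rw [← h]; simp
  have hunion : {ω | (Finset.univ.filter fun i => X i ω = k).card = j}
      = ⋃ S ∈ Finset.powersetCard j (Finset.univ : Finset (Fin u)), A S := by
    ext ω
    simp only [Set.mem_setOf_eq, Set.mem_iUnion]
    constructor
    · intro h
      refine ⟨Finset.univ.filter fun i => X i ω = k, ?_, ?_⟩
      · rw [Finset.mem_powersetCard]; exact ⟨Finset.subset_univ _, h⟩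
      · rw [hAfilter]
    · rintro ⟨S, hS, hωS⟩
      rw [hAfilter] at hωS
      rw [hωS]
      exact (Finset.mem_powersetCard.mp hS).2
  have hmeasA : ∀ S, MeasurableSet (A S) := by
    intro S
    apply MeasurableSet.iInter
    intro i
    apply hmeas i
    by_cases hi : i ∈ S <;> simp [hi]
  have hPA : ∀ S : Finset (Fin u), P (A S) = (e k)^S.card * (1 - e k)^(u - S.card) := by
    intro S
    rw [hA]
    rw [hindep.meas_iInter (fun i => ⟨(if i ∈ S then {k} else {k}ᶜ), by
      by_cases hi : i ∈ S <;> simp [hi], rfl⟩)]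
    have hval : ∀ i, P (X i ⁻¹' (if i ∈ S then {k} else {k}ᶜ))
        = if i ∈ S then e k else 1 - e k := by
      intro i
      by_cases hi : i ∈ S
      · simp [hi, he i k]
      · simp only [hi, if_false]
        rw [show (({k}ᶜ : Set ℤ)) = ({k} : Set ℤ)ᶜ from rfl, Set.preimage_compl,
          prob_compl_eq_one_sub (hmeas i (measurableSet_singleton k)), he i k]
    rw [Finset.prod_congr rfl (fun i _ => hval i)]
    rw [← Finset.prod_filter_mul_prod_filter_not Finset.univ (· ∈ S)]
    have h1 : Finset.univ.filter (· ∈ S) = S := by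
      ext i; simp
    have h2 : Finset.univ.filter (fun i => ¬ i ∈ S) = Sᶜ := by
      ext i; simp
    rw [h1, h2]
    rw [Finset.prod_congr rfl (fun i hi => if_pos hi),
      Finset.prod_congr rfl (fun i (hi : i ∈ Sᶜ) => if_neg (Finset.mem_compl.mp hi))]
    rw [Finset.prod_const, Finset.prod_const, Finset.card_compl]
    simp
  rw [hunion, measure_biUnion_finset ?_ (fun S _ => hmeasA S)]
  · rw [Finset.sum_congr rfl (fun S hS => by
      rw [hPA S, (Finset.mem_powersetCard.mp hS).2])]
    rw [Finset.sum_const, Finset.card_powersetCard]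
    simp [mul_assoc]
  · intro S hS T hT hST
    simp only [Function.onFun]
    rw [Set.disjoint_left]
    intro ω hωS hωT
    rw [hAfilter] at hωS hωT
    exact hST (hωS ▸ hωT ▸ rfl)

open MeasureTheory ProbabilityTheory in
set_option maxHeartbeats 2000000 in
/-- For i.i.d. ℤ-valued `X₁,…,X_u`, a set `K` with `|K| ≤ 5` and total mass at least
`α`, pmf at most `β` outside `K`, and `α₀` with `α₀ ≥ (5/4)β` and `α ≥ 6α₀`, the
probability that some `k ∉ K` receives at least `α₀·u` votes or that no `k ∈ K`
receives at least `α₀·u` votes is at most `(u+1)·exp(−2u(α₀/5)²)`. -/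
theorem stmt_8 {Ω : Type*} [MeasurableSpace Ω] (P : Measure Ω) [IsProbabilityMeasure P]
    (u : ℕ) (hu : 0 < u) (X : Fin u → Ω → ℤ)
    (hmeas : ∀ j, Measurable (X j))
    (hindep : iIndepFun X P)
    (hident : ∀ j, Measure.map (X j) P = Measure.map (X ⟨0, hu⟩) P)
    (K : Finset ℤ) (hK : K.card ≤ 5)
    (α β α₀ : ℝ) (hβ0 : 0 ≤ β)
    (hmass : α ≤ ∑ k ∈ K, (P {ω | X ⟨0, hu⟩ ω = k}).toReal)
    (hout : ∀ k ∉ K, (P {ω | X ⟨0, hu⟩ ω = k}).toReal ≤ β)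
    (hα₀β : (5 / 4 : ℝ) * β ≤ α₀) (hαα₀ : 6 * α₀ ≤ α) :
    P ({ω | ∃ k ∉ K, α₀ * u ≤ ((Finset.univ.filter fun j => X j ω = k).card : ℝ)} ∪
        {ω | ∀ k ∈ K, ((Finset.univ.filter fun j => X j ω = k).card : ℝ) < α₀ * u}) ≤
      ENNReal.ofReal ((u + 1) * Real.exp (-2 * u * (α₀ / 5) ^ 2)) := by
  classical
  set T : ℝ := Real.exp (-2 * u * (α₀ / 5) ^ 2) with hT
  have hT0 : 0 < T := Real.exp_pos _
  by_cases htriv : 1 ≤ ((u:ℝ) + 1) * T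
  · refine le_trans prob_le_one ?_
    rw [← ENNReal.ofReal_one]
    apply ENNReal.ofReal_le_ofReal
    push_cast
    linarith
  push_neg at htriv
  -- setup
  set e : ℤ → ENNReal := fun k => P {ω | X ⟨0, hu⟩ ω = k} with he_def
  have hsetk : ∀ (i : Fin u) (k : ℤ), (X i ⁻¹' {k}) = {ω | X i ω = k} := by
    intro i k; ext ω; simp
  have he : ∀ (i : Fin u) (k : ℤ), P (X i ⁻¹' {k}) = e k := by
    intro i k
    rw [← Measure.map_apply (hmeas i) (measurableSet_singleton k), hident i,
      Measure.map_apply (hmeas ⟨0, hu⟩) (measurableSet_singleton k), hsetk]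
  have he1 : ∀ k, e k ≤ 1 := fun k => prob_le_one
  have hetop : ∀ k, e k ≠ ⊤ := fun k => ne_top_of_le_ne_top ENNReal.one_ne_top (he1 k)
  set p : ℤ → ℝ := fun k => (e k).toReal with hp_def
  have hp0 : ∀ k, 0 ≤ p k := fun k => ENNReal.toReal_nonneg
  have hp1 : ∀ k, p k ≤ 1 := by
    intro k
    rw [hp_def]
    simpa using ENNReal.toReal_mono ENNReal.one_ne_top (he1 k)
  have hpe : ∀ k, e k = ENNReal.ofReal (p k) := fun k => (ENNReal.ofReal_toReal (hetop k)).symm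
  -- sum over K at most 1
  have hsumK : ∑ k ∈ K, p k ≤ 1 := by
    have hdisjK : ∀ k1 ∈ K, ∀ k2 ∈ K, k1 ≠ k2 →
        Disjoint (X ⟨0,hu⟩ ⁻¹' {k1}) (X ⟨0,hu⟩ ⁻¹' {k2}) := by
      intro k1 _ k2 _ hne
      rw [Set.disjoint_left]
      intro ω h1 h2
      simp only [Set.mem_preimage, Set.mem_singleton_iff] at h1 h2
      exact hne (h1 ▸ h2 ▸ rfl)
    have hsum : ∑ k ∈ K, e k = P (⋃ k ∈ K, X ⟨0,hu⟩ ⁻¹' {k}) := by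
      rw [measure_biUnion_finset hdisjK
        (fun k _ => hmeas _ (measurableSet_singleton k))]
      exact Finset.sum_congr rfl fun k _ => (he _ k).symm
    have hle : ∑ k ∈ K, e k ≤ 1 := hsum ▸ prob_le_one
    calc ∑ k ∈ K, p k = (∑ k ∈ K, e k).toReal := by
          rw [ENNReal.toReal_sum (fun k _ => hetop k)]
      _ ≤ (1 : ENNReal).toReal := ENNReal.toReal_mono ENNReal.one_ne_top hle
      _ = 1 := by simp
  -- basic bounds on α₀
  have hα₀0 : 0 ≤ α₀ := le_trans (by linarith) hα₀β
  have hα₀6 : α₀ ≤ 1/6 := by linarith [hsumK, hmass]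
  have hβα : β ≤ 4/5 * α₀ := by linarith
  have hu1 : (1:ℝ) ≤ u := by exact_mod_cast hu
  -- regime facts from ¬htriv
  have hreg : 25 * Real.log ((u:ℝ)+1) < 2 * (u:ℝ) * α₀^2 := by
    have hpos : (0:ℝ) < ((u:ℝ) + 1) * T := by positivity
    have := Real.log_lt_log hpos htriv
    rw [Real.log_one, Real.log_mul (by positivity) (ne_of_gt hT0), hT, Real.log_exp] at this
    have hlogu : 0 ≤ Real.log ((u:ℝ)+1) := Real.log_nonneg (by linarith)
    nlinarith
  have hα₀pos : 0 < α₀ := by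
    rcases eq_or_lt_of_le hα₀0 with h | h
    · exfalso
      rw [← h] at hreg
      have hlogu : 0 ≤ Real.log ((u:ℝ)+1) := Real.log_nonneg (by linarith)
      nlinarith
    · exact h
  -- m = ceil of α₀ u
  set m : ℕ := ⌈α₀ * (u:ℝ)⌉₊ with hm_def
  have hm1 : 1 ≤ m := by
    rw [hm_def]
    apply Nat.one_le_iff_ne_zero.mpr
    simp only [ne_eq, Nat.ceil_eq_zero, not_le]
    positivity
  have hmu : m ≤ u := by
    rw [hm_def, Nat.ceil_le]
    nlinarith
  have hNle : ∀ (k : ℤ) (ω : Ω), (Finset.univ.filter fun j => X j ω = k).card ≤ u := by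
    intro k ω
    calc (Finset.univ.filter fun j => X j ω = k).card
        ≤ (Finset.univ : Finset (Fin u)).card := Finset.card_filter_le _ _
      _ = u := by simp
  -- event 1 bound
  set D : ℤ → Set Ω := fun k => {ω | α₀ * u ≤ ((Finset.univ.filter fun j => X j ω = k).card : ℝ)}
    with hD_def
  set E : ℤ → Set Ω := fun k => if k ∈ K then ∅ else D k with hE_def
  have hA_sub : {ω | ∃ k ∉ K, α₀ * u ≤ ((Finset.univ.filter fun j => X j ω = k).card : ℝ)}
      ⊆ ⋃ k : ℤ, E k := by
    intro ω hω
    obtain ⟨k, hkK, hk⟩ := hω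
    refine Set.mem_iUnion.mpr ⟨k, ?_⟩
    rw [hE_def]
    simp only [hkK, if_false]
    exact hk
  have hDk_bound : ∀ k ∉ K, P (D k) ≤ ((u + 1 - m : ℕ) : ENNReal) * (ENNReal.ofReal T * e k) := by
    intro k hkK
    have hDk_eq : D k ⊆ ⋃ j ∈ Finset.Icc m u, {ω | (Finset.univ.filter fun i => X i ω = k).card = j} := by
      intro ω hω
      rw [hD_def] at hω
      simp only [Set.mem_setOf_eq] at hω
      refine Set.mem_biUnion (Finset.mem_Icc.mpr ⟨?_, hNle k ω⟩) rfl
      rw [hm_def, Nat.ceil_le]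
      exact hω
    refine le_trans (le_trans (measure_mono hDk_eq) (measure_biUnion_finset_le _ _)) ?_
    have hterm : ∀ j ∈ Finset.Icc m u,
        P {ω | (Finset.univ.filter fun i => X i ω = k).card = j}
          ≤ ENNReal.ofReal T * e k := by
      intro j hj
      obtain ⟨hjm, hju⟩ := Finset.mem_Icc.mp hj
      rw [pmf_eq P u X hmeas hindep e he k j]
      rw [hpe k]
      have h1mp : (1 : ENNReal) - ENNReal.ofReal (p k) = ENNReal.ofReal (1 - p k) := by
        rw [← ENNReal.ofReal_one, ← ENNReal.ofReal_sub _ (hp0 k)]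
      rw [h1mp, ← ENNReal.ofReal_pow (hp0 k), ← ENNReal.ofReal_pow (by linarith [hp1 k]),
        ← ENNReal.ofReal_natCast (u.choose j), ← ENNReal.ofReal_mul (by positivity),
        ← ENNReal.ofReal_mul (by positivity), ← ENNReal.ofReal_mul hT0.le]
      apply ENNReal.ofReal_le_ofReal
      rcases eq_or_lt_of_le (hp0 k) with hpk0 | hpk0
      · rw [← hpk0]
        have hj1 : 1 ≤ j := le_trans hm1 hjm
        rw [zero_pow (by omega)]
        simp
      · have hja : α₀ * (u:ℝ) ≤ (j:ℝ) := by
          have : α₀ * (u:ℝ) ≤ (m:ℝ) := Nat.le_ceil _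
          have hjm' : (m:ℝ) ≤ (j:ℝ) := by exact_mod_cast hjm
          linarith
        have := core1 u j hju (p k) α₀ hpk0 (le_trans (hout k hkK) hβα) hα₀6 hja hreg
        calc (u.choose j : ℝ) * p k ^ j * (1 - p k) ^ (u - j) ≤ p k * T := this
          _ = T * p k := by ring
    refine le_trans (Finset.sum_le_sum hterm) ?_
    rw [Finset.sum_const, Nat.card_Icc]
    simp [nsmul_eq_mul]
  have hEk_bound : ∀ k : ℤ, P (E k) ≤ ((u + 1 - m : ℕ) : ENNReal) * ENNReal.ofReal T * e k := by
    intro k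
    rw [hE_def]
    by_cases hk : k ∈ K
    · simp [hk]
    · simp only [hk, if_false]
      rw [mul_assoc]
      exact hDk_bound k hk
  have htsum_e : ∑' k : ℤ, e k ≤ 1 := by
    have hdisj : Pairwise (Function.onFun Disjoint fun k : ℤ => X ⟨0,hu⟩ ⁻¹' {k}) := by
      intro k1 k2 hne
      simp only [Function.onFun]
      rw [Set.disjoint_left]
      intro ω h1 h2
      simp only [Set.mem_preimage, Set.mem_singleton_iff] at h1 h2
      exact hne (h1 ▸ h2 ▸ rfl)
    have := measure_iUnion hdisj (fun k => hmeas _ (measurableSet_singleton k)) (μ := P)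
    calc ∑' k : ℤ, e k = ∑' k : ℤ, P (X ⟨0,hu⟩ ⁻¹' {k}) := by
          exact tsum_congr fun k => (he _ k).symm
      _ = P (⋃ k : ℤ, X ⟨0,hu⟩ ⁻¹' {k}) := this.symm
      _ ≤ 1 := prob_le_one
  have hPA : P {ω | ∃ k ∉ K, α₀ * u ≤ ((Finset.univ.filter fun j => X j ω = k).card : ℝ)}
      ≤ ((u + 1 - m : ℕ) : ENNReal) * ENNReal.ofReal T := by
    calc P {ω | ∃ k ∉ K, α₀ * u ≤ ((Finset.univ.filter fun j => X j ω = k).card : ℝ)}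
        ≤ P (⋃ k : ℤ, E k) := measure_mono hA_sub
      _ ≤ ∑' k : ℤ, P (E k) := measure_iUnion_le E
      _ ≤ ∑' k : ℤ, ((u + 1 - m : ℕ) : ENNReal) * ENNReal.ofReal T * e k :=
          ENNReal.tsum_le_tsum hEk_bound
      _ = ((u + 1 - m : ℕ) : ENNReal) * ENNReal.ofReal T * ∑' k : ℤ, e k :=
          ENNReal.tsum_mul_left
      _ ≤ ((u + 1 - m : ℕ) : ENNReal) * ENNReal.ofReal T * 1 := by
          apply mul_le_mul_right htsum_e
      _ = ((u + 1 - m : ℕ) : ENNReal) * ENNReal.ofReal T := by rw [mul_one]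
  -- event 2
  have hKne : K.Nonempty := by
    by_contra h
    rw [Finset.not_nonempty_iff_eq_empty] at h
    subst h
    simp at hmass
    linarith
  obtain ⟨ks, hksK, hks⟩ : ∃ ks ∈ K, α / 5 ≤ p ks := by
    by_contra h
    push_neg at h
    have hlt : ∑ k ∈ K, p k < ∑ k ∈ K, (α/5) := by
      apply Finset.sum_lt_sum_of_nonempty hKne
      intro k hk
      exact h k hk
    rw [Finset.sum_const] at hlt
    have hcard : (K.card : ℝ) ≤ 5 := by exact_mod_cast hK
    have hα5 : 0 < α/5 := by linarith
    have : (K.card : ℝ) * (α/5) ≤ 5 * (α/5) := by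
      apply mul_le_mul_of_nonneg_right hcard hα5.le
    simp only [nsmul_eq_mul] at hlt
    linarith [hmass]
  have hpks : 6/5 * α₀ ≤ p ks := by linarith
  have hB_sub : {ω | ∀ k ∈ K, ((Finset.univ.filter fun j => X j ω = k).card : ℝ) < α₀ * u}
      ⊆ ⋃ j ∈ Finset.range m, {ω | (Finset.univ.filter fun i => X i ω = ks).card = j} := by
    intro ω hω
    have hωks := hω ks hksK
    refine Set.mem_biUnion (Finset.mem_range.mpr ?_) rfl
    rw [hm_def, Nat.lt_ceil]
    exact hωks
  have hPB : P {ω | ∀ k ∈ K, ((Finset.univ.filter fun j => X j ω = k).card : ℝ) < α₀ * u}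
      ≤ (m : ENNReal) * ENNReal.ofReal T := by
    refine le_trans (le_trans (measure_mono hB_sub) (measure_biUnion_finset_le _ _)) ?_
    have hterm : ∀ j ∈ Finset.range m,
        P {ω | (Finset.univ.filter fun i => X i ω = ks).card = j} ≤ ENNReal.ofReal T := by
      intro j hj
      have hjm := Finset.mem_range.mp hj
      have hju : j ≤ u := le_trans (by omega) hmu
      have hja : (j:ℝ) ≤ α₀ * u := by
        have : (j:ℝ) < α₀ * u := by
          rw [← Nat.lt_ceil]
          exact hjm
        linarith
      rw [pmf_eq P u X hmeas hindep e he ks j, hpe ks]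
      have h1mp : (1 : ENNReal) - ENNReal.ofReal (p ks) = ENNReal.ofReal (1 - p ks) := by
        rw [← ENNReal.ofReal_one, ← ENNReal.ofReal_sub _ (hp0 ks)]
      rw [h1mp, ← ENNReal.ofReal_pow (hp0 ks), ← ENNReal.ofReal_pow (by linarith [hp1 ks]),
        ← ENNReal.ofReal_natCast (u.choose j), ← ENNReal.ofReal_mul (by positivity),
        ← ENNReal.ofReal_mul (by positivity)]
      apply ENNReal.ofReal_le_ofReal
      exact core2 u j hju hu (p ks) α₀ hα₀pos hα₀6 hpks (hp1 ks) hja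
    refine le_trans (Finset.sum_le_sum hterm) ?_
    rw [Finset.sum_const, Finset.card_range]
    simp [nsmul_eq_mul]
  -- combine
  refine le_trans (measure_union_le _ _) ?_
  refine le_trans (add_le_add hPA hPB) ?_
  have hmsum : (u + 1 - m) + m = u + 1 := by omega
  calc ((u + 1 - m : ℕ) : ENNReal) * ENNReal.ofReal T + (m : ENNReal) * ENNReal.ofReal T
      = (((u + 1 - m : ℕ) : ENNReal) + (m : ENNReal)) * ENNReal.ofReal T := by ring
    _ = ((u + 1 : ℕ) : ENNReal) * ENNReal.ofReal T := by
        rw [← Nat.cast_add, hmsum]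
    _ = ENNReal.ofReal ((u + 1 : ℕ) : ℝ) * ENNReal.ofReal T := by
        rw [ENNReal.ofReal_natCast]
    _ = ENNReal.ofReal (((u + 1 : ℕ) : ℝ) * T) := by
        rw [← ENNReal.ofReal_mul (by positivity)]
    _ = ENNReal.ofReal (((u:ℝ) + 1) * T) := by push_cast; ring_nf
    _ ≤ ENNReal.ofReal (((u:ℝ) + 1) * T) := le_rfl
end

section
/- Let N be a positive integer and let g : [0,1] → ℝ be a measurable function whose range contains at most N distinct values. Then ∫₀¹ (x − g(x))² dx ≥ 1/(12·N²). -/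
open MeasureTheory Set Metric

/-- Quantization lower bound: if a measurable `g : [0,1] → ℝ` takes at most `N`
distinct values, then `∫₀¹ (x − g(x))² dx ≥ 1/(12N²)`. -/

theorem stmt_13 (N : ℕ) (hN : 0 < N) (g : ℝ → ℝ) (hmeas : Measurable g)
    (hfin : (g '' Set.Icc (0 : ℝ) 1).Finite)
    (hcard : (g '' Set.Icc (0 : ℝ) 1).ncard ≤ N) :
    1 / (12 * (N : ℝ) ^ 2) ≤ ∫ x in (0 : ℝ)..1, (x - g x) ^ 2 := by
  set S : Set ℝ := g '' Set.Icc (0 : ℝ) 1 with hSdef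
  have hSne : S.Nonempty := ⟨g 0, 0, by norm_num, rfl⟩
  have hScpt : IsCompact S := hfin.isCompact
  have hNpos : (0:ℝ) < N := by exact_mod_cast hN
  set c : ℝ := 1 / (2 * N) with hcdef
  have hc0 : 0 < c := by positivity
  set T : ℝ := c ^ 2 with hTdef
  have hT0 : 0 < T := by positivity
  set μ : Measure ℝ := volume.restrict (Set.Ioc (0:ℝ) 1) with hμdef
  have hμuniv : μ Set.univ = 1 := by
    simp [hμdef, Real.volume_Ioc]
  have : IsFiniteMeasure μ := ⟨by simp [hμuniv]⟩
  set F : ℝ → ℝ := fun x => min (infDist x S ^ 2) T with hFdef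
  have hFmeas : Measurable F :=
    (((continuous_infDist_pt S).measurable).pow_const 2).min measurable_const
  have hFnn : ∀ x, 0 ≤ F x := fun x => le_min (sq_nonneg _) hT0.le
  have hFbdd : ∀ x, F x ≤ T := fun x => min_le_right _ _
  have hFint : Integrable F μ := by
    refine Integrable.mono' (integrable_const T) hFmeas.aestronglyMeasurable ?_
    exact Filter.Eventually.of_forall fun x => by
      rw [Real.norm_eq_abs, abs_of_nonneg (hFnn x)]; exact hFbdd x
  -- Step 1: pointwise bound F ≤ (x - g x)^2 on Ioc 0 1, and integrability
  obtain ⟨r, hr⟩ := hScpt.isBounded.subset_closedBall 0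
  have hr0 : 0 ≤ r := by
    obtain ⟨s, hs⟩ := hSne
    have := hr hs
    simp only [Metric.mem_closedBall] at this
    exact le_trans dist_nonneg this
  have hGmeas : Measurable fun x => (x - g x) ^ 2 :=
    ((measurable_id.sub hmeas).pow_const 2)
  have hGint : Integrable (fun x => (x - g x) ^ 2) μ := by
    refine Integrable.mono' (integrable_const ((1 + r) ^ 2)) hGmeas.aestronglyMeasurable ?_
    filter_upwards [ae_restrict_mem measurableSet_Ioc] with x hx
    have hgx : g x ∈ S := ⟨x, ⟨hx.1.le, hx.2⟩, rfl⟩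
    have h1 : |g x| ≤ r := by
      have := hr hgx
      simpa [Real.dist_eq] using this
    have h2 : |x - g x| ≤ 1 + r := by
      calc |x - g x| ≤ |x| + |g x| := abs_sub _ _
        _ ≤ 1 + r := by
            have : |x| ≤ 1 := abs_le.2 ⟨by linarith [hx.1], hx.2⟩
            linarith
    rw [Real.norm_eq_abs, abs_of_nonneg (sq_nonneg _)]
    calc (x - g x) ^ 2 = |x - g x| ^ 2 := (sq_abs _).symm
      _ ≤ (1 + r) ^ 2 := by
          apply pow_le_pow_left₀ (abs_nonneg _) h2
  have step1 : ∫ x, F x ∂μ ≤ ∫ x, (x - g x) ^ 2 ∂μ := by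
    refine integral_mono_of_nonneg (Filter.Eventually.of_forall hFnn) hGint ?_
    filter_upwards [ae_restrict_mem measurableSet_Ioc] with x hx
    have hgx : g x ∈ S := ⟨x, ⟨hx.1.le, hx.2⟩, rfl⟩
    have h1 : infDist x S ≤ |x - g x| := by
      simpa [Real.dist_eq] using infDist_le_dist_of_mem hgx
    calc F x ≤ infDist x S ^ 2 := min_le_left _ _
      _ ≤ |x - g x| ^ 2 := pow_le_pow_left₀ infDist_nonneg h1 2
      _ = (x - g x) ^ 2 := sq_abs _
  -- Step 2: layer cake
  have step2 : ∫ x, F x ∂μ = ∫ t in Set.Ioc 0 T, (μ {a | t ≤ F a}).toReal :=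
    hFint.integral_eq_integral_Ioc_meas_le (Filter.Eventually.of_forall hFnn)
      (Filter.Eventually.of_forall hFbdd)
  -- Step 3: measure bound: for 0 < t ≤ T, 1 - 2*N*sqrt t ≤ (μ {a | t ≤ F a}).toReal
  have step3 : ∀ t ∈ Set.Ioc (0:ℝ) T, 1 - 2 * N * Real.sqrt t ≤ (μ {a | t ≤ F a}).toReal := by
    rintro t ⟨ht0, htT⟩
    set u : ℝ := Real.sqrt t with hudef
    have hu0 : 0 < u := Real.sqrt_pos.2 ht0
    -- sublevel set is covered by N intervals of length 2u
    have hsub : {a : ℝ | F a < t} ⊆ ⋃ s ∈ hfin.toFinset, Set.Icc (s - u) (s + u) := by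
      intro a ha
      simp only [Set.mem_setOf_eq] at ha
      have hd2 : infDist a S ^ 2 < t := by
        rcases min_lt_iff.1 ha with h | h
        · exact h
        · linarith
      have hdu : infDist a S < u := by
        nlinarith [infDist_nonneg (x := a) (s := S), Real.sq_sqrt ht0.le,
          Real.sqrt_nonneg t]
      obtain ⟨s, hsS, hds⟩ := hScpt.exists_infDist_eq_dist hSne a
      refine Set.mem_biUnion (hfin.mem_toFinset.2 hsS) ?_
      rw [hds] at hdu
      rw [Real.dist_eq] at hdu
      have := abs_lt.1 hdu
      constructor <;> linarith [this.1, this.2]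
    have hcover : μ {a : ℝ | F a < t} ≤ ENNReal.ofReal (2 * N * u) := by
      calc μ {a : ℝ | F a < t} ≤ μ (⋃ s ∈ hfin.toFinset, Set.Icc (s - u) (s + u)) :=
            measure_mono hsub
        _ ≤ volume (⋃ s ∈ hfin.toFinset, Set.Icc (s - u) (s + u)) :=
            Measure.restrict_le_self _
        _ ≤ ∑ s ∈ hfin.toFinset, volume (Set.Icc (s - u) (s + u)) :=
            measure_biUnion_finset_le _ _
        _ = ∑ s ∈ hfin.toFinset, ENNReal.ofReal (2 * u) := by
            refine Finset.sum_congr rfl fun s _ => ?_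
            rw [Real.volume_Icc]
            ring_nf
        _ = hfin.toFinset.card * ENNReal.ofReal (2 * u) := by
            rw [Finset.sum_const, nsmul_eq_mul]
        _ ≤ N * ENNReal.ofReal (2 * u) := by
            gcongr
            have hcardF : hfin.toFinset.card ≤ N := by
              rwa [Set.ncard_eq_toFinset_card _ hfin] at hcard
            exact_mod_cast hcardF
        _ = ENNReal.ofReal (2 * N * u) := by
            rw [← ENNReal.ofReal_natCast, ← ENNReal.ofReal_mul (by positivity)]
            ring_nf
    have hmeasset : MeasurableSet {a : ℝ | F a < t} := hFmeas measurableSet_Iio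
    have hcompl : {a : ℝ | t ≤ F a} = {a : ℝ | F a < t}ᶜ := by
      ext a; simp [not_lt]
    have hμle : μ {a : ℝ | F a < t} ≤ 1 := by
      rw [← hμuniv]; exact measure_mono (Set.subset_univ _)
    rw [hcompl, measure_compl hmeasset (lt_of_le_of_lt hμle (by norm_num)).ne, hμuniv]
    rw [ENNReal.toReal_sub_of_le hμle (by norm_num)]
    simp only [ENNReal.toReal_one]
    have : (μ {a : ℝ | F a < t}).toReal ≤ 2 * N * u := by
      have := ENNReal.toReal_mono ENNReal.ofReal_ne_top hcover
      rwa [ENNReal.toReal_ofReal (by positivity)] at this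
    linarith
  -- Step 4: integral comparison
  have hanti : AntitoneOn (fun t => (μ {a | t ≤ F a}).toReal) (Set.Icc 0 T) := by
    intro t1 _ t2 _ h
    refine ENNReal.toReal_mono ?_ (measure_mono fun a ha => le_trans h ha)
    exact (lt_of_le_of_lt (le_trans (measure_mono (Set.subset_univ _)) hμuniv.le)
      (by norm_num)).ne
  have hint_h : IntegrableOn (fun t => (μ {a | t ≤ F a}).toReal) (Set.Ioc 0 T) :=
    (AntitoneOn.integrableOn_isCompact isCompact_Icc hanti).mono_set Set.Ioc_subset_Icc_self
  have hint_lb : IntegrableOn (fun t => 1 - 2 * N * Real.sqrt t) (Set.Ioc 0 T) :=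
    (continuous_const.sub (continuous_const.mul Real.continuous_sqrt)).integrableOn_Ioc
  have step4 : ∫ t in Set.Ioc 0 T, (1 - 2 * N * Real.sqrt t)
      ≤ ∫ t in Set.Ioc 0 T, (μ {a | t ≤ F a}).toReal :=
    setIntegral_mono_on hint_lb hint_h measurableSet_Ioc step3
  -- Step 5: compute the lower bound integral
  have step5 : ∫ t in Set.Ioc 0 T, (1 - 2 * N * Real.sqrt t) = 1 / (12 * (N:ℝ) ^ 2) := by
    rw [← intervalIntegral.integral_of_le hT0.le]
    have h1 : IntervalIntegrable (fun t => Real.sqrt t) volume 0 T :=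
      Real.continuous_sqrt.intervalIntegrable 0 T
    rw [intervalIntegral.integral_sub (intervalIntegrable_const) (h1.const_mul _),
      intervalIntegral.integral_const_mul, intervalIntegral.integral_const]
    simp only [Real.sqrt_eq_rpow]
    rw [integral_rpow (Or.inl (by norm_num))]
    have hz : (0:ℝ) ^ ((1:ℝ)/2 + 1) = 0 := Real.zero_rpow (by norm_num)
    have hT32 : T ^ ((1:ℝ)/2 + 1) = c ^ 3 := by
      rw [hTdef, ← Real.rpow_natCast c 2, ← Real.rpow_mul hc0.le,
        show ((2:ℕ):ℝ) * ((1:ℝ)/2 + 1) = ((3:ℕ):ℝ) by push_cast; norm_num, Real.rpow_natCast]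
    rw [hz, hT32, smul_eq_mul, mul_one, hTdef, hcdef]
    have hNne : (N:ℝ) ≠ 0 := hNpos.ne'
    field_simp
    ring
  -- Combine
  have hfinal : ∫ x in (0:ℝ)..1, (x - g x) ^ 2 = ∫ x, (x - g x) ^ 2 ∂μ := by
    rw [intervalIntegral.integral_of_le (by norm_num : (0:ℝ) ≤ 1)]
  calc 1 / (12 * (N:ℝ) ^ 2) = ∫ t in Set.Ioc 0 T, (1 - 2 * N * Real.sqrt t) := step5.symm
    _ ≤ ∫ t in Set.Ioc 0 T, (μ {a | t ≤ F a}).toReal := step4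
    _ = ∫ x, F x ∂μ := step2.symm
    _ ≤ ∫ x, (x - g x) ^ 2 ∂μ := step1
    _ = ∫ x in (0:ℝ)..1, (x - g x) ^ 2 := hfinal.symm
end
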